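/- For every composition s = (s(1),…,s(a)), the number of Stirling s-permutations equals the product ∏_{k=1}^{a} (s(1)+s(2)+⋯+s(k−1)+1), where the factor for k = 1 is the empty sum plus one, i.e., 1. -/

import Mathlib

/-- `w` is an `s`-permutation: a word on the alphabet `{1,…,ℓ(s)}` with exactly `s(i)`
occurrences of each letter `i`. -/
def IsSPerm (s w : List ℕ) : Prop :=
  (∀ x ∈ w, 1 ≤ x ∧ x ≤ s.length) ∧
    ∀ i : Fin s.length, w.count ((i : ℕ) + 1) = s.get i

/-- `w` avoids the pattern 212: there are no positions `p < q < r` with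
`w_p = w_r` and `w_q < w_p`. -/
def Avoids212 (w : List ℕ) : Prop :=
  ¬ ∃ p q r : Fin w.length, p < q ∧ q < r ∧ w.get p = w.get r ∧ w.get q < w.get p


/-- insertion of a block of `m` copies of `A` at position `j`. -/
def ins (u : List ℕ) (j m A : ℕ) : List ℕ := u.take j ++ List.replicate m A ++ u.drop j

lemma ins_length {u : List ℕ} {j m A : ℕ} (hj : j ≤ u.length) :
    (ins u j m A).length = u.length + m := by
  simp [ins]; omega

lemma ins_getElem_lt {u : List ℕ} {j m A i : ℕ} (hi : i < j) (hj : j ≤ u.length) :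
    (ins u j m A)[i]'(by rw [ins_length hj]; omega) = u[i]'(by omega) := by
  unfold ins
  rw [List.getElem_append_left (by simp; omega), List.getElem_append_left (by simp; omega)]
  exact List.getElem_take

lemma ins_getElem_block {u : List ℕ} {j m A i : ℕ} (hij : j ≤ i) (hi : i < j + m) (hj : j ≤ u.length) :
    (ins u j m A)[i]'(by rw [ins_length hj]; omega) = A := by
  unfold ins
  rw [List.getElem_append_left (by simp; omega), List.getElem_append_right (by simp; omega)]
  simp

lemma ins_getElem_ge {u : List ℕ} {j m A i : ℕ} (hij : j + m ≤ i) (hi : i < u.length + m)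
    (hj : j ≤ u.length) :
    (ins u j m A)[i]'(by rw [ins_length hj]; omega) = u[i - m]'(by omega) := by
  unfold ins
  rw [List.getElem_append_right (by simp; omega)]
  rw [List.getElem_drop]
  have h2 : j + (i - (u.take j ++ List.replicate m A).length) = i - m := by simp; omega
  simp only [h2]

lemma avoids_elim {w : List ℕ} (h : Avoids212 w) {p q r : ℕ} (hp : p < w.length)
    (hq : q < w.length) (hr : r < w.length) (hpq : p < q) (hqr : q < r)
    (heq : w[p] = w[r]) (hlt : w[q] < w[p]) : False :=
  h ⟨⟨p, hp⟩, ⟨q, hq⟩, ⟨r, hr⟩, Fin.mk_lt_mk.mpr hpq, Fin.mk_lt_mk.mpr hqr,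
    by simpa using heq, by simpa using hlt⟩

lemma avoids_of_ins {u : List ℕ} {j m A : ℕ} (hj : j ≤ u.length)
    (h : Avoids212 (ins u j m A)) : Avoids212 u := by
  rintro ⟨⟨p, hp⟩, ⟨q, hq⟩, ⟨r, hr⟩, hpq, hqr, heq, hlt⟩
  simp only [Fin.mk_lt_mk] at hpq hqr
  simp only [List.get_eq_getElem] at heq hlt
  have key : ∀ i, (hi : i < u.length) →
      (ins u j m A)[if i < j then i else i + m]'(by rw [ins_length hj]; split <;> omega)
        = u[i] := by
    intro i hi
    split
    · exact ins_getElem_lt (by omega) hj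
    · rw [ins_getElem_ge (by omega) (by omega) hj]
      simp only [Nat.add_sub_cancel]
  refine avoids_elim h (p := if p < j then p else p + m) (q := if q < j then q else q + m)
    (r := if r < j then r else r + m) (by rw [ins_length hj]; split <;> omega)
    (by rw [ins_length hj]; split <;> omega) (by rw [ins_length hj]; split <;> omega)
    (by split <;> split <;> omega) (by split <;> split <;> omega) ?_ ?_
  · rw [key p hp, key r hr]; exact heq
  · rw [key q hq, key p hp]; exact hlt

lemma avoids_ins {u : List ℕ} {j m A : ℕ} (hj : j ≤ u.length) (hA : ∀ x ∈ u, x < A)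
    (hu : Avoids212 u) : Avoids212 (ins u j m A) := by
  rintro ⟨⟨p, hp⟩, ⟨q, hq⟩, ⟨r, hr⟩, hpq, hqr, heq, hlt⟩
  simp only [Fin.mk_lt_mk] at hpq hqr
  simp only [List.get_eq_getElem] at heq hlt
  rw [ins_length hj] at hp hq hr
  have key : ∀ i (hi : i < u.length + m) (hio : i < j ∨ j + m ≤ i),
      (ins u j m A)[i]'(by rw [ins_length hj]; omega)
        = u[if i < j then i else i - m]'(by split <;> omega) := by
    intro i hi hio
    split
    · exact ins_getElem_lt (by omega) hj
    · exact ins_getElem_ge (by omega) (by omega) hj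
  have hqo : q < j ∨ j + m ≤ q := by
    by_contra hc
    push_neg at hc
    have hvq : (ins u j m A)[q]'(by rw [ins_length hj]; omega) = A :=
      ins_getElem_block (by omega) (by omega) hj
    rcases lt_or_ge p j with h1 | h1
    · have hvp := ins_getElem_lt (u := u) (m := m) (A := A) h1 hj
      have hAp : u[p]'(by omega) < A := hA _ (List.getElem_mem _)
      rw [hvq, hvp] at hlt
      omega
    · have hvp := ins_getElem_block (u := u) (A := A) (m := m) h1 (by omega) hj
      rw [hvq, hvp] at hlt
      exact lt_irrefl _ hlt
  rcases lt_or_ge p j with h1 | h1'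
  case _ =>
    -- p < j, so p not in block
    have hpo : p < j ∨ j + m ≤ p := Or.inl h1
    have hro : r < j ∨ j + m ≤ r := by
      by_contra hc
      push_neg at hc
      have hvr : (ins u j m A)[r]'(by rw [ins_length hj]; omega) = A :=
        ins_getElem_block (by omega) (by omega) hj
      rw [key p hp hpo, hvr] at heq
      have hAp : u[if p < j then p else p - m]'(by split <;> omega) < A :=
        hA _ (List.getElem_mem _)
      omega
    rw [key p hp hpo, key r hr hro] at heq
    rw [key q hq hqo, key p hp hpo] at hlt
    exact avoids_elim hu (by split <;> omega) (by split <;> omega) (by split <;> omega)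
      (by split <;> split <;> omega) (by split <;> split <;> omega) heq hlt
  case _ =>
    rcases lt_or_ge p (j + m) with h2 | h2
    · -- p in block
      have hvp : (ins u j m A)[p]'(by rw [ins_length hj]; omega) = A :=
        ins_getElem_block h1' h2 hj
      have hro : r < j ∨ j + m ≤ r := by
        rcases hqo with hq1 | hq1
        · omega
        · right; omega
      rw [hvp, key r hr hro] at heq
      have hAr : u[if r < j then r else r - m]'(by split <;> omega) < A :=
        hA _ (List.getElem_mem _)
      omega
    · -- p ≥ j + m
      have hpo : p < j ∨ j + m ≤ p := Or.inr h2
      have hro : r < j ∨ j + m ≤ r := Or.inr (by omega)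
      rw [key p hp hpo, key r hr hro] at heq
      rw [key q hq hqo, key p hp hpo] at hlt
      exact avoids_elim hu (by split <;> omega) (by split <;> omega) (by split <;> omega)
        (by split <;> split <;> omega) (by split <;> split <;> omega) heq hlt

lemma prefix_block (w : List ℕ) (A : ℕ)
    (H : ∀ q r (hr : r < w.length) (hqr : q < r), w[r] = A → w[q]'(by omega) = A) :
    ∃ v, w = List.replicate (w.count A) A ++ v ∧ A ∉ v := by
  induction w with
  | nil => exact ⟨[], by simp, by simp⟩
  | cons y w' ih =>
    by_cases hy : y = A
    · subst hy
      obtain ⟨v, hv, hnv⟩ := ih (fun q r hr hqr hrA => by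
        have := H (q + 1) (r + 1) (by simpa using Nat.succ_lt_succ hr)
          (Nat.succ_lt_succ hqr) (by simpa using hrA)
        simpa using this)
      refine ⟨v, ?_, hnv⟩
      rw [List.count_cons_self, List.replicate_succ]
      simpa using hv
    · have hnmem : A ∉ w' := by
        intro hmem
        obtain ⟨r, hr, hrA⟩ := List.mem_iff_getElem.mp hmem
        have := H 0 (r + 1) (by simpa using Nat.succ_lt_succ hr)
          (Nat.succ_pos r) (by simpa using hrA)
        simp at this
        exact hy this
      refine ⟨y :: w', ?_, by simp [hnmem, Ne.symm hy]⟩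
      rw [List.count_cons_of_ne hy, List.count_eq_zero_of_not_mem hnmem]
      simp

lemma block_decomp (w : List ℕ) (A : ℕ)
    (H2 : ∀ p q r (hr : r < w.length) (hpq : p < q) (hqr : q < r), w[p]'(by omega) = A →
      w[r] = A → w[q]'(by omega) = A) :
    ∃ u1 u2, w = u1 ++ List.replicate (w.count A) A ++ u2 ∧ A ∉ u1 ∧ A ∉ u2 := by
  induction w with
  | nil => exact ⟨[], [], by simp, by simp, by simp⟩
  | cons x w' ih =>
    by_cases hx : x = A
    · subst hx
      obtain ⟨v, hv, hnv⟩ := prefix_block (x :: w') x (fun q r hr hqr hrA => by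
        match q with
        | 0 => simp
        | q' + 1 =>
          exact H2 0 (q' + 1) r hr (Nat.succ_pos q') hqr (by simp) hrA)
      exact ⟨[], v, by simpa using hv, by simp, hnv⟩
    · obtain ⟨u1, u2, hw, h1, h2⟩ := ih (fun p q r hr hpq hqr hpA hrA => by
        have := H2 (p + 1) (q + 1) (r + 1) (by simpa using Nat.succ_lt_succ hr)
          (Nat.succ_lt_succ hpq) (Nat.succ_lt_succ hqr) (by simpa using hpA)
          (by simpa using hrA)
        simpa using this)
      refine ⟨x :: u1, u2, ?_, by simp [h1, Ne.symm hx], h2⟩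
      rw [List.count_cons_of_ne hx]
      simpa using hw

lemma H2_of_avoids {w : List ℕ} {A : ℕ} (hw : Avoids212 w) (hle : ∀ x ∈ w, x ≤ A) :
    ∀ p q r (hr : r < w.length) (hpq : p < q) (hqr : q < r), w[p]'(by omega) = A →
      w[r] = A → w[q]'(by omega) = A := by
  intro p q r hr hpq hqr hpA hrA
  by_contra hq
  have hqmem : w[q]'(by omega) ≤ A := hle _ (List.getElem_mem _)
  exact avoids_elim hw (by omega) (by omega) hr hpq hqr (hpA.trans hrA.symm)
    (by omega)

lemma count_ins {u : List ℕ} {j m A x : ℕ} :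
    (ins u j m A).count x = u.count x + if x = A then m else 0 := by
  unfold ins
  rw [List.count_append, List.count_append, List.count_replicate]
  conv_rhs => rw [← List.take_append_drop j u, List.count_append]
  by_cases hxA : x = A <;> simp [hxA] <;> omega

lemma mem_ins {u : List ℕ} {j m A x : ℕ} (hx : x ∈ ins u j m A) :
    x ∈ u ∨ x = A := by
  unfold ins at hx
  simp only [List.mem_append, List.mem_replicate] at hx
  rcases hx with (h | h) | h
  · exact Or.inl (List.mem_of_mem_take h)
  · exact Or.inr h.2
  · exact Or.inl (List.mem_of_mem_drop h)

lemma filter_ins {u : List ℕ} {j m A : ℕ} (hA : ∀ x ∈ u, x ≠ A) :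
    (ins u j m A).filter (fun x => x ≠ A) = u := by
  unfold ins
  rw [List.filter_append, List.filter_append, List.filter_replicate]
  rw [List.filter_eq_self.mpr (fun a ha => by
    simpa using hA a (List.mem_of_mem_take ha))]
  rw [List.filter_eq_self.mpr (fun a ha => by
    simpa using hA a (List.mem_of_mem_drop ha))]
  simp [List.take_append_drop]

lemma takeWhile_append_cons {l1 l2 : List ℕ} {A : ℕ} (h : ∀ x ∈ l1, x ≠ A) :
    (l1 ++ A :: l2).takeWhile (fun x => x ≠ A) = l1 := by
  induction l1 with
  | nil => simp [List.takeWhile_cons]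
  | cons a l ih =>
    have ha : a ≠ A := h a (by simp)
    simp only [List.cons_append, List.takeWhile_cons, decide_eq_true_eq]
    rw [if_pos ha, ih (fun x hx => h x (by simp [hx]))]

lemma takeWhile_ins {u : List ℕ} {j m A : ℕ} (hA : ∀ x ∈ u, x ≠ A) (hm : 0 < m) :
    (ins u j m A).takeWhile (fun x => x ≠ A) = u.take j := by
  obtain ⟨m', rfl⟩ : ∃ m', m = m' + 1 := ⟨m - 1, by omega⟩
  unfold ins
  rw [List.replicate_succ]
  rw [show u.take j ++ (A :: List.replicate m' A) ++ u.drop j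
      = u.take j ++ A :: (List.replicate m' A ++ u.drop j) by simp]
  exact takeWhile_append_cons (fun x hx => hA x (List.mem_of_mem_take hx))

lemma length_eq_sum_count {n : ℕ} (w : List ℕ) (h : ∀ x ∈ w, 1 ≤ x ∧ x ≤ n) :
    w.length = ∑ i : Fin n, w.count ((i : ℕ) + 1) := by
  induction w with
  | nil => simp
  | cons x w ih =>
    have hx := h x (by simp)
    have hrest := ih (fun y hy => h y (by simp [hy]))
    simp only [List.count_cons, List.length_cons, beq_iff_eq]
    rw [Finset.sum_add_distrib, ← hrest]
    have hone : ∑ i : Fin n, (if x = (i : ℕ) + 1 then 1 else 0) = 1 := by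
      have hc : x - 1 < n := by omega
      rw [show (fun (i : Fin n) => if x = (i : ℕ) + 1 then 1 else 0)
          = fun i => if i = ⟨x - 1, hc⟩ then 1 else 0 from funext fun i => by
        refine if_congr ?_ rfl rfl
        simp only [Fin.ext_iff]
        omega]
      simp
    omega

lemma isSPerm_length {s w : List ℕ} (h : IsSPerm s w) : w.length = s.sum := by
  rw [length_eq_sum_count w h.1]
  rw [show s.sum = ∑ i : Fin s.length, s.get i by rw [← List.sum_ofFn]; simp]
  exact Finset.sum_congr rfl fun i _ => h.2 i

lemma isSPerm_ins {t u : List ℕ} {m j : ℕ}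
    (hu : IsSPerm t u) (hj : j ≤ u.length) :
    IsSPerm (t ++ [m]) (ins u j m (t.length + 1)) := by
  obtain ⟨hmem, hcount⟩ := hu
  constructor
  · intro x hx
    rcases mem_ins hx with h | h
    · have := hmem x h
      simp only [List.length_append, List.length_cons, List.length_nil]
      omega
    · simp only [List.length_append, List.length_cons, List.length_nil]
      omega
  · intro i
    rw [count_ins]
    have hilen : (i : ℕ) < t.length + 1 := by simpa using i.isLt
    simp only [List.get_eq_getElem]
    rcases lt_or_ge (i : ℕ) t.length with hi | hi
    · rw [if_neg (by omega), List.getElem_append_left hi]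
      have h := hcount ⟨i, hi⟩
      simp only [List.get_eq_getElem] at h
      rw [h]
      omega
    · have hieq : (i : ℕ) = t.length := by omega
      have hAnot : u.count (t.length + 1) = 0 :=
        List.count_eq_zero_of_not_mem (fun hmem' => by have := hmem _ hmem'; omega)
      rw [if_pos (by omega)]
      have hconc : (t ++ [m])[(i : ℕ)]'(by simp; omega) = m :=
        List.getElem_concat_length hieq _
      rw [hconc, hieq, hAnot]
      omega

lemma isSPerm_of_ins {t u : List ℕ} {m j : ℕ}
    (hw : IsSPerm (t ++ [m]) (ins u j m (t.length + 1)))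
    (hA : ∀ x ∈ u, x ≠ t.length + 1) : IsSPerm t u := by
  have hmem' : ∀ x ∈ u, x ∈ ins u j m (t.length + 1) := by
    intro x hx
    rw [← List.take_append_drop j u] at hx
    unfold ins
    rcases List.mem_append.mp hx with h | h
    · simp [h]
    · simp [h]
  constructor
  · intro x hx
    have h1 := hw.1 x (hmem' x hx)
    have h2 := hA x hx
    simp only [List.length_append, List.length_cons, List.length_nil] at h1
    omega
  · intro i
    have hi1 : (i : ℕ) < t.length := i.isLt
    have h := hw.2 ⟨i, by simp only [List.length_append, List.length_cons, List.length_nil]; omega⟩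
    simp only [Fin.val_mk] at h
    rw [count_ins, if_neg (by omega), Nat.add_zero] at h
    simp only [List.get_eq_getElem] at h ⊢
    rw [h, List.getElem_append_left hi1]

lemma card_step (t : List ℕ) (m : ℕ) (hm : 0 < m) :
    Nat.card {w : List ℕ // IsSPerm (t ++ [m]) w ∧ Avoids212 w}
      = Nat.card {w : List ℕ // IsSPerm t w ∧ Avoids212 w} * (t.sum + 1) := by
  set A := t.length + 1 with hA
  have hf : ∀ p : {w : List ℕ // IsSPerm t w ∧ Avoids212 w} × Fin (t.sum + 1),
      IsSPerm (t ++ [m]) (ins p.1.1 p.2 m A) ∧ Avoids212 (ins p.1.1 p.2 m A) := by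
    rintro ⟨⟨u, hu1, hu2⟩, j⟩
    have hlen : u.length = t.sum := isSPerm_length hu1
    have hj : (j : ℕ) ≤ u.length := by have := j.isLt; omega
    exact ⟨isSPerm_ins hu1 hj,
      avoids_ins hj (fun x hx => by have := hu1.1 x hx; omega) hu2⟩
  let f : {w : List ℕ // IsSPerm t w ∧ Avoids212 w} × Fin (t.sum + 1) →
      {w : List ℕ // IsSPerm (t ++ [m]) w ∧ Avoids212 w} :=
    fun p => ⟨ins p.1.1 p.2 m A, hf p⟩
  have hbij : Function.Bijective f := by
    constructor
    · rintro ⟨⟨u, hu1, hu2⟩, j⟩ ⟨⟨u', hu1', hu2'⟩, j'⟩ heq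
      have heq' : ins u j m A = ins u' j' m A := congrArg Subtype.val heq
      have hAu : ∀ x ∈ u, x ≠ A := fun x hx => by have := hu1.1 x hx; omega
      have hAu' : ∀ x ∈ u', x ≠ A := fun x hx => by have := hu1'.1 x hx; omega
      have hu_eq : u = u' := by
        have h1 := filter_ins (u := u) (j := j) (m := m) hAu
        have h2 := filter_ins (u := u') (j := j') (m := m) hAu'
        rw [← h1, ← h2, heq']
      have hj_eq : (j : ℕ) = (j' : ℕ) := by
        have htake : u.take j = u'.take j' := by
          rw [← takeWhile_ins (u := u) (j := j) (m := m) hAu hm,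
            ← takeWhile_ins (u := u') (j := j') (m := m) hAu' hm, heq']
        have hlen : u.length = t.sum := isSPerm_length hu1
        have hlen' : u'.length = t.sum := isSPerm_length hu1'
        have := congrArg List.length htake
        simp only [List.length_take] at this
        have hj1 := j.isLt
        have hj2 := j'.isLt
        omega
      simp only [Prod.ext_iff, Subtype.ext_iff]
      exact ⟨hu_eq, Fin.ext hj_eq⟩
    · rintro ⟨w, hw1, hw2⟩
      have hle : ∀ x ∈ w, x ≤ A := fun x hx => by
        have := hw1.1 x hx
        simp only [List.length_append, List.length_cons, List.length_nil] at this
        omega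
      have hcA : w.count A = m := by
        have h := hw1.2 ⟨t.length, by simp⟩
        simp only [List.get_eq_getElem, Fin.val_mk] at h
        rw [List.getElem_concat_length rfl _] at h
        exact h
      obtain ⟨u1, u2, hdecomp, hn1, hn2⟩ := block_decomp w A (H2_of_avoids hw2 hle)
      rw [hcA] at hdecomp
      have hins : w = ins (u1 ++ u2) u1.length m A := by
        unfold ins
        rw [List.take_left, List.drop_left]
        exact hdecomp
      have hAu : ∀ x ∈ u1 ++ u2, x ≠ A := by
        intro x hx hxA
        rcases List.mem_append.mp hx with h | h
        · exact hn1 (hxA ▸ h)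
        · exact hn2 (hxA ▸ h)
      have hsp : IsSPerm t (u1 ++ u2) :=
        isSPerm_of_ins (j := u1.length) (by rw [← hins]; exact hw1) hAu
      have hav : Avoids212 (u1 ++ u2) :=
        avoids_of_ins (j := u1.length) (by simp) (hins ▸ hw2)
      have hlen : (u1 ++ u2).length = t.sum := isSPerm_length hsp
      have hjlt : u1.length < t.sum + 1 := by
        simp only [List.length_append] at hlen
        omega
      exact ⟨(⟨u1 ++ u2, hsp, hav⟩, ⟨u1.length, hjlt⟩), Subtype.ext hins.symm⟩
  rw [← Nat.card_congr (Equiv.ofBijective f hbij), Nat.card_prod]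
  simp

/-- The number of Stirling `s`-permutations equals
`∏_{k=1}^{a} (s(1) + ⋯ + s(k-1) + 1)`. -/
theorem card_stirling (s : List ℕ) (hs : ∀ x ∈ s, 0 < x) :
    Nat.card {w : List ℕ // IsSPerm s w ∧ Avoids212 w} =
      ∏ k ∈ Finset.range s.length, ((s.take k).sum + 1) := by
  induction s using List.reverseRecOn with
  | nil =>
    have h0 : IsSPerm [] [] ∧ Avoids212 [] :=
      ⟨⟨by simp, fun i => i.elim0⟩, by rintro ⟨p, -⟩; exact p.elim0⟩
    have huniq : ∀ w : List ℕ, (IsSPerm [] w ∧ Avoids212 w) → w = [] := by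
      rintro w ⟨⟨h1, -⟩, -⟩
      match w with
      | [] => rfl
      | x :: _ =>
        have := h1 x (by simp)
        simp at this
        omega
    haveI : Unique {w : List ℕ // IsSPerm [] w ∧ Avoids212 w} :=
      ⟨⟨⟨[], h0⟩⟩, fun ⟨w, hw⟩ => Subtype.ext (huniq w hw)⟩
    simp [Nat.card_unique]
  | append_singleton t m ih =>
    have hm : 0 < m := hs m (by simp)
    have hst : ∀ x ∈ t, 0 < x := fun x hx => hs x (by simp [hx])
    rw [card_step t m hm, ih hst]
    rw [show (t ++ [m]).length = t.length + 1 by simp, Finset.prod_range_succ]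
    congr 1
    · apply Finset.prod_congr rfl
      intro k hk
      rw [List.take_append_of_le_length (le_of_lt (Finset.mem_range.mp hk))]
    · rw [List.take_left]
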